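/- Let γ∈(0,1], ψ(x) = exp(−|x|^γ)/χ with χ = ∫_ℝ exp(−|x|^γ)dx, ψ^σ(x) = ψ(x/σ)/σ for σ>0, and q_σ := q ∗ ψ^σ. For any probability density q on ℝ and any σ>0, there exists a constant τ>0 such that, as w→∞: (i) ∫_{[w,∞)} q_σ(x) dx ≥ exp(−τ·w^γ) for all sufficiently large w, and (ii) min_{|x|≤w} q_σ(x) ≥ exp(−τ·w^γ) for all sufficiently large w. Equivalently, both quantities are exp(−O(w^γ)) as w→∞. -/

import Mathlib

open MeasureTheory Filter Real Set
open scoped ENNReal NNReal Classical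

noncomputable section

/-- Shift operator on Borel measures: `(shiftMeasure a μ) B = μ (B - a)`. -/
def shiftMeasure (a : ℝ) (μ : Measure ℝ) : Measure ℝ := μ.map (· + a)

/-- Kullback–Leibler divergence between Borel measures on `ℝ`. -/
def KLdiv (μ ν : Measure ℝ) : ℝ≥0∞ :=
  if μ ≪ ν ∧ Integrable (llr μ ν) μ then ENNReal.ofReal (∫ x, llr μ ν x ∂μ) else ⊤

/-- Standing assumptions on the cost function. -/
structure IsCostFun (c : ℝ → ℝ) (α β : ℝ) : Prop where
  nonneg : ∀ x, 0 ≤ c x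
  zero : c 0 = 0
  even : ∀ x, c (-x) = c x
  mono : ∀ x y : ℝ, |x| ≤ |y| → c x ≤ c y
  continuous : Continuous c
  tail : Tendsto (fun x : ℝ => c x / (β * x ^ α)) atTop (nhds 1)


/-- Normalization constant `χ = ∫ exp(-|x|^γ) dx`. -/
def chiC (γ : ℝ) : ℝ := ∫ x : ℝ, Real.exp (-|x| ^ γ)

/-- The density `ψ(x) = exp(-|x|^γ) / χ`. -/
def psi (γ : ℝ) (x : ℝ) : ℝ := Real.exp (-|x| ^ γ) / chiC γ

/-- The dilated density `ψ^σ(x) = ψ(x/σ)/σ`. -/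
def psiS (γ σ : ℝ) (x : ℝ) : ℝ := psi γ (x / σ) / σ

/-- The smoothed density `q_σ = q ∗ ψ^σ`. -/
def smoothed (γ σ : ℝ) (q : ℝ → ℝ) (x : ℝ) : ℝ := ∫ y, q y * psiS γ σ (x - y)

lemma integrableOn_exp_neg_rpow' {γ : ℝ} (hγ : 0 < γ) :
    IntegrableOn (fun x : ℝ => Real.exp (-x ^ γ)) (Ioi 0) := by
  rw [← integrableOn_Ioi_comp_rpow_iff _ (ne_of_gt (one_div_pos.mpr hγ))]
  have h : IntegrableOn (fun x : ℝ => |1/γ| * (Real.exp (-x) * x ^ (1/γ - 1))) (Ioi 0) :=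
    (Real.GammaIntegral_convergent (one_div_pos.mpr hγ)).const_mul |1/γ|
  refine h.congr_fun (fun x hx => ?_) measurableSet_Ioi
  rw [smul_eq_mul, ← Real.rpow_mul (le_of_lt hx), one_div_mul_cancel (ne_of_gt hγ), Real.rpow_one]
  ring

lemma integrable_exp_neg_abs_rpow' {γ : ℝ} (hγ : 0 < γ) :
    Integrable (fun x : ℝ => Real.exp (-|x| ^ γ)) := by
  have hIoi : IntegrableOn (fun x : ℝ => Real.exp (-|x| ^ γ)) (Ioi 0) := by
    refine (integrableOn_exp_neg_rpow' hγ).congr_fun (fun x hx => ?_) measurableSet_Ioi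
    rw [abs_of_pos hx]
  have hIic : IntegrableOn (fun x : ℝ => Real.exp (-|x| ^ γ)) (Iic 0) := by
    rw [← Measure.map_neg_eq_self (volume : Measure ℝ)]
    have m : MeasurableEmbedding fun x : ℝ => -x := (Homeomorph.neg ℝ).measurableEmbedding
    rw [m.integrableOn_map_iff]
    simp_rw [Function.comp_def, abs_neg, neg_preimage, neg_Iic, neg_zero]
    exact Iff.mpr integrableOn_Ici_iff_integrableOn_Ioi hIoi
  have := hIic.union hIoi
  rwa [Iic_union_Ioi, integrableOn_univ] at this

lemma rpow_add_le_add_rpow' {γ a b : ℝ} (hγ0 : 0 ≤ γ) (hγ1 : γ ≤ 1) (ha : 0 ≤ a) (hb : 0 ≤ b) :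
    (a + b) ^ γ ≤ a ^ γ + b ^ γ := by
  lift a to ℝ≥0 using ha
  lift b to ℝ≥0 using hb
  have := NNReal.rpow_add_le_add_rpow a b hγ0 hγ1
  exact_mod_cast this

/-- `exp(-O(w^γ))` lower bounds: there is `τ > 0` such that, for all large `w`,
`∫_{[w,∞)} q_σ ≥ exp(-τ w^γ)` and `min_{|x|≤w} q_σ(x) ≥ exp(-τ w^γ)`. -/
theorem smoothed_density_lower_bounds (γ : ℝ) (hγ : γ ∈ Set.Ioc (0 : ℝ) 1)
    (q : ℝ → ℝ) (hqm : Measurable q) (hq0 : ∀ x, 0 ≤ q x) (hq1 : ∫ x, q x = 1)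
    (σ : ℝ) (hσ : 0 < σ) :
    ∃ τ > (0 : ℝ), ∀ᶠ w : ℝ in atTop,
      (ENNReal.ofReal (Real.exp (-τ * w ^ γ)) ≤ ∫⁻ x in Set.Ici w, ENNReal.ofReal (smoothed γ σ q x)) ∧
      (∀ x ∈ Set.Icc (-w) w, Real.exp (-τ * w ^ γ) ≤ smoothed γ σ q x) := by
  obtain ⟨hγ0, hγ1⟩ := hγ
  have hχint := integrable_exp_neg_abs_rpow' hγ0
  have hχpos : 0 < chiC γ := by
    rw [chiC]
    refine (integral_pos_iff_support_of_nonneg_ae ?_ hχint).mpr ?_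
    · filter_upwards with x using (Real.exp_pos _).le
    · have hs : Function.support (fun x : ℝ => Real.exp (-|x| ^ γ)) = univ := by
        ext x; simp [Function.mem_support, (Real.exp_pos _).ne']
      rw [hs]
      simp
  -- psiS facts
  have hψc : Continuous (psiS γ σ) := by
    have h1 : Continuous fun z : ℝ => |z / σ| ^ γ :=
      ((continuous_id.div_const σ).abs).rpow_const (fun x => Or.inr hγ0.le)
    exact ((Real.continuous_exp.comp h1.neg).div_const (chiC γ)).div_const σ
  have hψ0 : ∀ z, 0 < psiS γ σ z := by
    intro z
    unfold psiS psi
    positivity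
  have hψub : ∀ z, psiS γ σ z ≤ 1 / (chiC γ * σ) := by
    intro z
    unfold psiS psi
    rw [div_div]
    rw [div_le_div_iff_of_pos_right (by positivity : (0:ℝ) < chiC γ * σ)]
    rw [Real.exp_le_one_iff]
    simp [Real.rpow_nonneg (abs_nonneg _)]
  have hψlb : ∀ R z : ℝ, 0 ≤ R → |z| ≤ R →
      Real.exp (-(R / σ) ^ γ) / (chiC γ * σ) ≤ psiS γ σ z := by
    intro R z hR hz
    unfold psiS psi
    rw [div_div]
    rw [div_le_div_iff_of_pos_right (by positivity : (0:ℝ) < chiC γ * σ), Real.exp_le_exp,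
      neg_le_neg_iff]
    rw [abs_div, abs_of_pos hσ]
    exact Real.rpow_le_rpow (by positivity) (by gcongr) hγ0.le
  -- q is integrable
  have hqi : Integrable q := by
    by_contra h
    rw [integral_undef h] at hq1
    norm_num at hq1
  -- choose M with mass ≥ 1/2 on [-M, M]
  obtain ⟨n, hn⟩ : ∃ n : ℕ, 1/2 ≤ ∫ y in Icc (-(n:ℝ)) n, q y := by
    have hmono : Monotone (fun n : ℕ => Icc (-(n:ℝ)) (n:ℝ)) := by
      intro a b hab
      have : (a:ℝ) ≤ b := by exact_mod_cast hab
      exact Icc_subset_Icc (by linarith) this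
    have hU : (⋃ n : ℕ, Icc (-(n:ℝ)) (n:ℝ)) = univ := by
      ext x
      simp only [mem_iUnion, mem_univ, iff_true]
      obtain ⟨n, hn⟩ := exists_nat_ge |x|
      exact ⟨n, abs_le.mp hn⟩
    have ht := tendsto_setIntegral_of_monotone (fun n : ℕ => measurableSet_Icc) hmono
      (by rw [hU]; exact hqi.integrableOn)
    rw [hU, setIntegral_univ, hq1] at ht
    exact (ht.eventually (eventually_ge_nhds (by norm_num : (1:ℝ)/2 < 1))).exists
  set M : ℝ := (n : ℝ) with hMdef
  have hM0 : 0 ≤ M := Nat.cast_nonneg n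
  -- key pointwise bound
  have key : ∀ R x : ℝ, 0 ≤ R → |x| ≤ R →
      Real.exp (-((R + M) / σ) ^ γ) / (chiC γ * σ) / 2 ≤ smoothed γ σ q x := by
    intro R x hR hx
    set c : ℝ := Real.exp (-((R + M) / σ) ^ γ) / (chiC γ * σ) with hc
    have hc0 : 0 < c := by rw [hc]; positivity
    have hgi : Integrable (fun y => q y * psiS γ σ (x - y)) := by
      have := Integrable.bdd_mul (f := fun y => psiS γ σ (x - y)) hqi
        ((hψc.comp (continuous_const.sub continuous_id)).aestronglyMeasurable)
        (c := 1 / (chiC γ * σ)) (ae_of_all _ fun y => by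
          rw [Real.norm_eq_abs, abs_of_pos (hψ0 _)]; exact hψub _)
      simpa [mul_comm] using this
    calc c / 2 = c * (1/2) := by ring
      _ ≤ c * ∫ y in Icc (-M) M, q y := by
          exact mul_le_mul_of_nonneg_left hn hc0.le
      _ = ∫ y in Icc (-M) M, c * q y := (integral_const_mul c _).symm
      _ ≤ ∫ y in Icc (-M) M, q y * psiS γ σ (x - y) := by
          refine setIntegral_mono_on ((hqi.const_mul c).integrableOn)
            (hgi.integrableOn) measurableSet_Icc (fun y hy => ?_)
          have hy' : |y| ≤ M := abs_le.mpr ⟨hy.1, hy.2⟩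
          have hxy : |x - y| ≤ R + M := (abs_sub _ _).trans (by gcongr)
          have := hψlb (R + M) (x - y) (by positivity) hxy
          calc c * q y = q y * c := mul_comm _ _
            _ ≤ q y * psiS γ σ (x - y) := mul_le_mul_of_nonneg_left this (hq0 y)
      _ ≤ ∫ y, q y * psiS γ σ (x - y) := by
          refine setIntegral_le_integral hgi ?_
          filter_upwards with y
          exact mul_nonneg (hq0 y) (hψ0 _).le
      _ = smoothed γ σ q x := rfl
  -- choose τ
  set A : ℝ := chiC γ * σ with hA
  have hA0 : 0 < A := by positivity
  set D : ℝ := (1 + M) ^ γ / σ ^ γ with hD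
  refine ⟨1 / σ ^ γ + 1, by positivity, ?_⟩
  have hT : Tendsto (fun w : ℝ => w ^ γ) atTop atTop := tendsto_rpow_atTop hγ0
  filter_upwards [hT.eventually_ge_atTop (D + Real.log (2 * A)), eventually_ge_atTop (0:ℝ)]
    with w hw hw0
  have h2A : (0:ℝ) < 2 * A := by positivity
  have hkey2 : Real.exp (-w ^ γ) ≤ Real.exp (-D) / (2 * A) := by
    calc Real.exp (-w ^ γ) ≤ Real.exp (-(D + Real.log (2 * A))) := by
          rw [Real.exp_le_exp]; linarith
      _ = Real.exp (-D) / (2 * A) := by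
          rw [neg_add, Real.exp_add, Real.exp_neg (Real.log (2 * A)), Real.exp_log h2A, div_eq_mul_inv]
  have hmain : ∀ R x : ℝ, 0 ≤ R → R ≤ w + 1 → |x| ≤ R →
      Real.exp (-(1 / σ ^ γ + 1) * w ^ γ) ≤ smoothed γ σ q x := by
    intro R x hR0 hR1 hx
    refine le_trans ?_ (key R x hR0 hx)
    have h1 : ((R + M) / σ) ^ γ ≤ w ^ γ / σ ^ γ + D := by
      rw [Real.div_rpow (by positivity) hσ.le]
      have h2 : (R + M) ^ γ ≤ w ^ γ + (1 + M) ^ γ := by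
        calc (R + M) ^ γ ≤ (w + (1 + M)) ^ γ :=
              Real.rpow_le_rpow (by positivity) (by linarith) hγ0.le
          _ ≤ w ^ γ + (1 + M) ^ γ := rpow_add_le_add_rpow' hγ0.le hγ1 hw0 (by positivity)
      calc (R + M) ^ γ / σ ^ γ ≤ (w ^ γ + (1 + M) ^ γ) / σ ^ γ := by
            gcongr
        _ = w ^ γ / σ ^ γ + D := by rw [hD, add_div]
    calc Real.exp (-(1 / σ ^ γ + 1) * w ^ γ)
        = Real.exp (-(w ^ γ / σ ^ γ)) * Real.exp (-w ^ γ) := by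
          rw [← Real.exp_add]; congr 1; field_simp; ring
      _ ≤ Real.exp (-(w ^ γ / σ ^ γ)) * (Real.exp (-D) / (2 * A)) :=
          mul_le_mul_of_nonneg_left hkey2 (Real.exp_pos _).le
      _ = Real.exp (-(w ^ γ / σ ^ γ + D)) / (2 * A) := by
          rw [neg_add, Real.exp_add, mul_div_assoc]
      _ ≤ Real.exp (-((R + M) / σ) ^ γ) / (2 * A) := by
          rw [div_le_div_iff_of_pos_right h2A, Real.exp_le_exp]
          linarith
      _ = Real.exp (-((R + M) / σ) ^ γ) / (chiC γ * σ) / 2 := by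
          rw [div_div, hA]; ring_nf
  constructor
  · calc ENNReal.ofReal (Real.exp (-(1 / σ ^ γ + 1) * w ^ γ))
        = ∫⁻ _ in Icc w (w+1), ENNReal.ofReal (Real.exp (-(1 / σ ^ γ + 1) * w ^ γ)) := by
          rw [setLIntegral_const, Real.volume_Icc, show w + 1 - w = 1 by ring,
            ENNReal.ofReal_one, mul_one]
      _ ≤ ∫⁻ x in Icc w (w+1), ENNReal.ofReal (smoothed γ σ q x) := by
          refine setLIntegral_mono' measurableSet_Icc (fun x hx => ?_)
          refine ENNReal.ofReal_le_ofReal ?_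
          refine hmain (w + 1) x (by linarith) le_rfl ?_
          rw [abs_le]
          constructor <;> [linarith [hx.1]; linarith [hx.2]]
      _ ≤ ∫⁻ x in Ici w, ENNReal.ofReal (smoothed γ σ q x) :=
          lintegral_mono_set Icc_subset_Ici_self
  · intro x hx
    exact hmain w x hw0 (by linarith) (abs_le.mpr ⟨hx.1, hx.2⟩)

end
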